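/- Let G = (L, B) be a finite graph, let λ > 0, and let p = λ/(1+λ). For ξ ∈ {−1,0,+1}^L write |ξ| ∈ {0,1}^L for the configuration |ξ|(x) = |ξ(x)|. Then for every ξ ∈ {−1,0,+1}^L: μ^G_λ(ξ) = 1{ξ(x)ξ(y) ≠ −1 for every edge ⟨xy⟩ ∈ B}·ψ^G_{p,2}(|ξ|)·2^{−k(|ξ|)}; in particular, picking a site configuration according to ψ^G_{p,2} and assigning an independent uniform sign from {−1,+1} to each open cluster (and 0 to closed vertices) produces a configuration distributed as the Widom–Rowlinson Gibbs measure μ^G_λ. -/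

import Mathlib

open Finset

noncomputable section

open scoped Classical

variable {V : Type*}

/-- The factor `p^b (1-p)^(1-b)`. -/
def bWeight (p : ℝ) (b : Bool) : ℝ := if b then p else 1 - p

/-- The number of open clusters of a site configuration `η`: the number of
connected components of the subgraph of `G` induced by the open vertices. -/
def siteClusters (G : SimpleGraph V) (η : V → Bool) : ℕ :=
  Nat.card (G.induce {x | η x = true}).ConnectedComponent

variable [Fintype V] [DecidableEq V]

/-- Unnormalized site-random-cluster weight. -/
def siteRCWeight (G : SimpleGraph V) (p q : ℝ) (η : V → Bool) : ℝ :=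
  (∏ x : V, bWeight p (η x)) * q ^ siteClusters G η

/-- The site-random-cluster measure `ψ^G_{p,q}`. -/
def siteRCMeasure (G : SimpleGraph V) (p q : ℝ) (η : V → Bool) : ℝ :=
  siteRCWeight G p q η / ∑ η' : V → Bool, siteRCWeight G p q η'

/-- Unnormalized Widom–Rowlinson weight with activity `lam`. -/
def wrWeight (G : SimpleGraph V) (lam : ℝ) (ξ : V → SignType) : ℝ :=
  (if ∀ x y : V, G.Adj x y → ξ x * ξ y ≠ -1 then 1 else 0) *
    ∏ x : V, lam ^ (if ξ x = 0 then 0 else 1)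

/-- The Widom–Rowlinson Gibbs measure `μ^G_lam`. -/
def wrMeasure (G : SimpleGraph V) (lam : ℝ) (ξ : V → SignType) : ℝ :=
  wrWeight G lam ξ / ∑ ξ' : V → SignType, wrWeight G lam ξ'

/-- The site configuration `|ξ|` of occupied vertices of `ξ`. -/
def absConfig (ξ : V → SignType) : V → Bool := fun x => decide (ξ x ≠ 0)

/-! ### Auxiliary material -/

/-- Number of occupied sites. -/
def occCard (η : V → Bool) : ℕ := (Finset.univ.filter fun x => η x = true).card

lemma walk_const {α β} {G' : SimpleGraph α} (g : α → β)
    (h : ∀ v w, G'.Adj v w → g v = g w) {v w} (hr : G'.Reachable v w) : g v = g w := by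
  obtain ⟨p⟩ := hr
  induction p with
  | nil => rfl
  | cons ha _ ih => exact (h _ _ ha).trans ih

lemma sign_eq_of_mul_ne_neg : ∀ a b : SignType, a ≠ 0 → b ≠ 0 → a * b ≠ -1 → a = b := by
  decide

/-- Feasible sign configurations with occupied set `η` are in bijection with
assignments of a sign to each open cluster. -/
def feasibleEquiv (G : SimpleGraph V) (η : V → Bool) :
    {ξ : V → SignType // (∀ x y : V, G.Adj x y → ξ x * ξ y ≠ -1) ∧ absConfig ξ = η} ≃
      ((G.induce {x | η x = true}).ConnectedComponent → Bool) where
  toFun ξ := SimpleGraph.ConnectedComponent.lift (fun v => decide (ξ.1 v.1 = 1))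
    (by
      intro v w p _
      refine walk_const (fun v => decide (ξ.1 v.1 = 1)) ?_ p.reachable
      rintro ⟨a, ha⟩ ⟨b, hb⟩ hadj
      have hadj' : G.Adj a b := hadj
      have h0a : ξ.1 a ≠ 0 := by
        have := congrFun ξ.2.2 a
        simp [absConfig, show η a = true from ha] at this
        exact this
      have h0b : ξ.1 b ≠ 0 := by
        have := congrFun ξ.2.2 b
        simp [absConfig, show η b = true from hb] at this
        exact this
      have := sign_eq_of_mul_ne_neg _ _ h0a h0b (ξ.2.1 a b hadj')
      simp [this])
  invFun f := ⟨fun x => if h : η x = true then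
      (if f ((G.induce {x | η x = true}).connectedComponentMk ⟨x, h⟩) then 1 else -1) else 0,
    by
      constructor
      · intro x y hadj
        by_cases hx : η x = true
        · by_cases hy : η y = true
          · have hadj' : (G.induce {x | η x = true}).Adj ⟨x, hx⟩ ⟨y, hy⟩ := by
              simpa using hadj
            have hcomp := SimpleGraph.ConnectedComponent.connectedComponentMk_eq_of_adj hadj'
            simp only [dif_pos hx, dif_pos hy, hcomp]
            cases f ((G.induce {x | η x = true}).connectedComponentMk ⟨y, hy⟩) <;> decide
          · simp [dif_neg hy]
        · simp [dif_neg hx]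
      · funext x
        by_cases hx : η x = true
        · simp only [absConfig, dif_pos hx]
          cases f ((G.induce {x | η x = true}).connectedComponentMk ⟨x, hx⟩) <;> simp [hx]
        · simp only [absConfig, dif_neg hx]
          simp [Bool.not_eq_true] at hx
          simp [hx]⟩
  left_inv := by
    rintro ⟨ξ, hfeas, habs⟩
    ext x
    by_cases hx : η x = true
    · have h0 : ξ x ≠ 0 := by
        have := congrFun habs x
        simp [absConfig, hx] at this
        exact this
      simp only [dif_pos hx, SimpleGraph.ConnectedComponent.lift_mk]
      have key : ∀ a : SignType, a ≠ 0 → (if decide (a = 1) = true then (1:SignType) else -1) = a := by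
        decide
      exact key _ h0
    · have h0 : ξ x = 0 := by
        have := congrFun habs x
        simp [absConfig, hx] at this
        simpa using this
      simp [dif_neg hx, h0]
  right_inv := by
    intro f
    funext c
    refine SimpleGraph.ConnectedComponent.ind (fun v => ?_) c
    obtain ⟨x, hx⟩ := v
    have hx' : η x = true := hx
    simp only [SimpleGraph.ConnectedComponent.lift_mk, dif_pos hx']
    cases hf : f ((G.induce {x | η x = true}).connectedComponentMk ⟨x, hx'⟩) <;> simp [hf]

lemma card_feasible (G : SimpleGraph V) (η : V → Bool) :
    (Finset.univ.filter fun ξ : V → SignType =>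
        (∀ x y : V, G.Adj x y → ξ x * ξ y ≠ -1) ∧ absConfig ξ = η).card
      = 2 ^ siteClusters G η := by
  have h1 : (Finset.univ.filter fun ξ : V → SignType =>
        (∀ x y : V, G.Adj x y → ξ x * ξ y ≠ -1) ∧ absConfig ξ = η).card
      = Fintype.card {ξ : V → SignType //
        (∀ x y : V, G.Adj x y → ξ x * ξ y ≠ -1) ∧ absConfig ξ = η} :=
    (Fintype.card_subtype _).symm
  rw [h1, ← Nat.card_eq_fintype_card, Nat.card_congr (feasibleEquiv G η), Nat.card_fun]
  simp [siteClusters, Nat.card_eq_fintype_card]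

lemma prod_pow_ite (lam : ℝ) (η : V → Bool) :
    (∏ x : V, lam ^ (if η x = true then 1 else 0)) = lam ^ occCard η := by
  rw [Finset.prod_pow_eq_pow_sum]
  congr 1
  simp [occCard, Finset.sum_boole]

lemma wrWeight_eq (G : SimpleGraph V) (lam : ℝ) (ξ : V → SignType) :
    wrWeight G lam ξ =
      (if ∀ x y : V, G.Adj x y → ξ x * ξ y ≠ -1 then 1 else 0) *
        lam ^ occCard (absConfig ξ) := by
  unfold wrWeight
  congr 1
  rw [← prod_pow_ite]
  refine Finset.prod_congr rfl fun x _ => ?_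
  by_cases h : ξ x = 0 <;> simp [absConfig, h]

lemma sum_wr_fiber (G : SimpleGraph V) (lam : ℝ) (η : V → Bool) :
    (∑ ξ : V → SignType, if absConfig ξ = η then wrWeight G lam ξ else 0)
      = lam ^ occCard η * 2 ^ siteClusters G η := by
  have : (∑ ξ : V → SignType, if absConfig ξ = η then wrWeight G lam ξ else 0)
      = ∑ ξ : V → SignType,
          (if (∀ x y : V, G.Adj x y → ξ x * ξ y ≠ -1) ∧ absConfig ξ = η then
            lam ^ occCard η else 0) := by
    refine Finset.sum_congr rfl fun ξ _ => ?_
    rw [wrWeight_eq]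
    by_cases h2 : absConfig ξ = η
    · by_cases h1 : ∀ x y : V, G.Adj x y → ξ x * ξ y ≠ -1
      · simp [h1, h2]
      · simp [h1, h2]
    · simp [h2, fun h => h2]
  rw [this, Finset.sum_ite, Finset.sum_const, Finset.sum_const_zero, add_zero,
    card_feasible, nsmul_eq_mul]
  push_cast
  ring

theorem wr_from_siteRC (G : SimpleGraph V) (lam : ℝ) (hlam : 0 < lam)
    (p : ℝ) (hp : p = lam / (1 + lam)) (ξ : V → SignType) :
    wrMeasure G lam ξ =
      (if ∀ x y : V, G.Adj x y → ξ x * ξ y ≠ -1 then 1 else 0) *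
        siteRCMeasure G p 2 (absConfig ξ) *
        ((2 : ℝ) ^ (-(siteClusters G (absConfig ξ) : ℤ))) := by
  have hl1 : (0:ℝ) < 1 + lam := by linarith
  have hn : ((1:ℝ)+lam) ^ Fintype.card V ≠ 0 := by positivity
  have hbW : ∀ η : V → Bool, (∏ x : V, bWeight p (η x))
      = lam ^ occCard η / (1+lam) ^ Fintype.card V := by
    intro η
    have hb : ∀ x : V, bWeight p (η x) = lam ^ (if η x = true then 1 else 0) / (1+lam) := by
      intro x
      cases hx : η x
      · simp only [bWeight, hx, Bool.false_eq_true, if_false, pow_zero, hp]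
        field_simp
        ring
      · simp [bWeight, hx, hp]
    rw [Finset.prod_congr rfl fun x _ => hb x, Finset.prod_div_distrib,
      Finset.prod_const, prod_pow_ite, Finset.card_univ]
  have hRCW : ∀ η : V → Bool, siteRCWeight G p 2 η
      = lam ^ occCard η * 2 ^ siteClusters G η / (1+lam) ^ Fintype.card V := by
    intro η; rw [siteRCWeight, hbW]; ring
  have hZ : (∑ ξ' : V → SignType, wrWeight G lam ξ')
      = ∑ η : V → Bool, lam ^ occCard η * 2 ^ siteClusters G η := by
    have h1 : ∀ ξ' : V → SignType, wrWeight G lam ξ'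
        = ∑ η : V → Bool, if absConfig ξ' = η then wrWeight G lam ξ' else 0 := by
      intro ξ'; rw [Finset.sum_ite_eq]; simp
    rw [Finset.sum_congr rfl fun ξ' _ => h1 ξ', Finset.sum_comm]
    exact Finset.sum_congr rfl fun η _ => sum_wr_fiber G lam η
  have hZpos : 0 < ∑ ξ' : V → SignType, wrWeight G lam ξ' := by
    rw [hZ]
    refine Finset.sum_pos (fun η _ => by positivity) ⟨fun _ => true, Finset.mem_univ _⟩
  have hZRC : (∑ η' : V → Bool, siteRCWeight G p 2 η')
      = (∑ ξ' : V → SignType, wrWeight G lam ξ') / (1+lam) ^ Fintype.card V := by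
    rw [hZ, Finset.sum_div]
    exact Finset.sum_congr rfl fun η _ => hRCW η
  by_cases hfeas : ∀ x y : V, G.Adj x y → ξ x * ξ y ≠ -1
  · rw [if_pos hfeas, one_mul]
    rw [wrMeasure, wrWeight_eq, if_pos hfeas, one_mul, siteRCMeasure, hZRC, hRCW]
    rw [zpow_neg, zpow_natCast]
    have h2 : (0:ℝ) < 2 ^ siteClusters G (absConfig ξ) := by positivity
    field_simp
  · rw [if_neg hfeas]
    rw [wrMeasure, wrWeight_eq, if_neg hfeas, zero_mul, zero_div, zero_mul, zero_mul]
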